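/- For every r ≥ 1, the 4×4 matrix B over F_{2^r} with rows (0,0,0,1), (1,1,0,0), (0,1,0,0), (0,0,1,1) (entries being the field elements 0 and 1) satisfies: B^3 is an NMDS matrix; that is, B is 3-NMDS. -/

import Mathlib

open Matrix

/-- The Hamming weight of a vector: the number of nonzero coordinates. -/
def wt {F : Type*} [Zero F] [DecidableEq F] {n : ℕ} (x : Fin n → F) : ℕ :=
  (Finset.univ.filter fun i => x i ≠ 0).card

/-- The differential branch number of a square matrix `M`:
the minimum of `wt x + wt (M x)` over all nonzero vectors `x`. -/
noncomputable def branchD {F : Type*} [Field F] [DecidableEq F] {n : ℕ}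
    (M : Matrix (Fin n) (Fin n) F) : ℕ :=
  sInf {k | ∃ x : Fin n → F, x ≠ 0 ∧ k = wt x + wt (M.mulVec x)}

/-- The linear branch number of a square matrix `M`:
the minimum of `wt x + wt (Mᵀ x)` over all nonzero vectors `x`. -/
noncomputable def branchL {F : Type*} [Field F] [DecidableEq F] {n : ℕ}
    (M : Matrix (Fin n) (Fin n) F) : ℕ :=
  sInf {k | ∃ x : Fin n → F, x ≠ 0 ∧ k = wt x + wt (Mᵀ.mulVec x)}

/-- A square matrix of order `n` is near-MDS (NMDS) if both its differential
and linear branch numbers equal `n`. -/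
def IsNMDS {F : Type*} [Field F] [DecidableEq F] {n : ℕ}
    (M : Matrix (Fin n) (Fin n) F) : Prop :=
  branchD M = n ∧ branchL M = n

lemma wt_eq4 {F : Type*} [Field F] [DecidableEq F] (x : Fin 4 → F) : wt x =
    (if x 0 = 0 then 0 else 1) + (if x 1 = 0 then 0 else 1)
    + (if x 2 = 0 then 0 else 1) + (if x 3 = 0 then 0 else 1) := by
  simp [wt, Finset.card_filter, Fin.sum_univ_four]

lemma key4 {F : Type*} [Field F] [DecidableEq F] (h2 : (2:F) = 0) (a b c d : F)
    (hx : ¬(a = 0 ∧ b = 0 ∧ c = 0 ∧ d = 0)) :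
    4 ≤ ((if a = 0 then 0 else 1) + (if b = 0 then 0 else 1)
      + (if c = 0 then 0 else 1) + (if d = 0 then 0 else 1))
    + ((if b + c + d = 0 then 0 else 1) + (if a + b + c = 0 then 0 else 1)
      + (if a + b + d = 0 then 0 else 1) + (if a + c + d = 0 then 0 else 1)) := by
  by_cases ha : a = 0 <;> by_cases hb : b = 0 <;> by_cases hc : c = 0 <;> by_cases hd : d = 0 <;>
    simp_all <;> split_ifs with h1 h2' h3 h4 <;> try omega
  all_goals exfalso
  · exact hd (by linear_combination h1 - h2')
  · exact hd (by linear_combination h4 - h2')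
  · exact hd (by linear_combination h3 - h2')
  · exact hc (by linear_combination h2' - h3)

lemma cube_eq {F : Type*} [Field F] [DecidableEq F] (h2 : (2:F) = 0) :
    (!![0, 0, 0, 1; 1, 1, 0, 0; 0, 1, 0, 0; 0, 0, 1, 1] : Matrix (Fin 4) (Fin 4) F) ^ 3
    = !![0,1,1,1; 1,1,1,0; 1,1,0,1; 1,0,1,1] := by
  ext i j
  fin_cases i <;> fin_cases j <;>
    simp [pow_succ, Matrix.mul_apply, Fin.sum_univ_four, Matrix.vecHead, Matrix.vecTail] <;>
    linear_combination h2

lemma mulVec_eq {F : Type*} [Field F] [DecidableEq F] (x : Fin 4 → F) :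
    (!![0,1,1,1; 1,1,1,0; 1,1,0,1; 1,0,1,1] : Matrix (Fin 4) (Fin 4) F).mulVec x
    = ![x 1 + x 2 + x 3, x 0 + x 1 + x 2, x 0 + x 1 + x 3, x 0 + x 2 + x 3] := by
  ext i
  fin_cases i <;>
    simp [Matrix.mulVec, dotProduct, Fin.sum_univ_four, Matrix.vecHead, Matrix.vecTail, add_assoc]

lemma branch_eq4 {F : Type*} [Field F] [DecidableEq F] (h2 : (2:F) = 0) :
    sInf {k | ∃ x : Fin 4 → F, x ≠ 0 ∧ k = wt x +
      wt ((!![0,1,1,1; 1,1,1,0; 1,1,0,1; 1,0,1,1] : Matrix (Fin 4) (Fin 4) F).mulVec x)} = 4 := by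
  have hmem : 4 ∈ {k | ∃ x : Fin 4 → F, x ≠ 0 ∧ k = wt x +
      wt ((!![0,1,1,1; 1,1,1,0; 1,1,0,1; 1,0,1,1] : Matrix (Fin 4) (Fin 4) F).mulVec x)} := by
    refine ⟨![1,0,0,0], ?_, ?_⟩
    · intro h
      have := congrFun h 0
      simp at this
    · rw [mulVec_eq, wt_eq4, wt_eq4]
      simp only [Matrix.cons_val_zero, Matrix.cons_val_one, Matrix.head_cons,
        Matrix.cons_val_two, Matrix.cons_val_three, Matrix.tail_cons, Fin.isValue]
      norm_num
  refine le_antisymm (Nat.sInf_le hmem) (le_csInf ⟨4, hmem⟩ ?_)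
  rintro k ⟨x, hx, rfl⟩
  rw [mulVec_eq, wt_eq4, wt_eq4]
  simp only [Matrix.cons_val_zero, Matrix.cons_val_one, Matrix.head_cons,
    Matrix.cons_val_two, Matrix.cons_val_three, Matrix.tail_cons, Fin.isValue]
  have hx' : ¬(x 0 = 0 ∧ x 1 = 0 ∧ x 2 = 0 ∧ x 3 = 0) := by
    rintro ⟨h0, h1, h2, h3⟩
    apply hx
    ext i
    fin_cases i <;> assumption
  have := key4 h2 (x 0) (x 1) (x 2) (x 3) hx'
  exact this

/-- Over any finite field of characteristic 2, the given 4×4 matrix B is 3-NMDS,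
i.e. B³ is NMDS. -/
theorem stmt_19 {F : Type*} [Field F] [Fintype F] [DecidableEq F] [CharP F 2] :
    IsNMDS ((!![0, 0, 0, 1; 1, 1, 0, 0; 0, 1, 0, 0; 0, 0, 1, 1] :
      Matrix (Fin 4) (Fin 4) F) ^ 3) := by
  have h2 : (2:F) = 0 := by exact_mod_cast CharP.cast_eq_zero F 2
  have hsym : (!![0,1,1,1; 1,1,1,0; 1,1,0,1; 1,0,1,1] : Matrix (Fin 4) (Fin 4) F)ᵀ
      = !![0,1,1,1; 1,1,1,0; 1,1,0,1; 1,0,1,1] := by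
    ext i j
    fin_cases i <;> fin_cases j <;> rfl
  constructor
  · rw [branchD, cube_eq h2, branch_eq4 h2]
  · rw [branchL, cube_eq h2]
    rw [hsym]
    exact branch_eq4 h2
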